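/- Let $\Bbbk$ be a field, $n \geq 1$, and $C$ a finite dimensional chain complex of $\Bbbk$-vector spaces with a right action of the symmetric group $\Sigma_n$, and $V$ a finite dimensional chain complex. Suppose $H_k(C) = 0$ for all $k \leq \kappa$ and each $C_m$ is a projective $\Bbbk[\Sigma_n]$-module. If $V$ is concentrated in degrees $\leq 0$, then $H_k\big(\mathrm{Hom}(C, V^{\otimes n})^{\Sigma_n}\big) = 0$ for all $k \geq -\kappa$, where $\Sigma_n$ acts on $V^{\otimes n}$ by permuting factors and on $\mathrm{Hom}$ by conjugation. -/

import Mathlib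

open DirectSum

/-- The degree-`d` component of the `n`-th tensor power of a graded vector space. -/
noncomputable abbrev gradedTensorPower (𝕜 : Type) [Field 𝕜] (V : ℤ → Type)
    [∀ d, AddCommGroup (V d)] [∀ d, Module 𝕜 (V d)] (n : ℕ) (d : ℤ) : Type :=
  ⨁ (g : {g : Fin n → ℤ // (∑ j, g j) = d}), PiTensorProduct 𝕜 (fun j => V (g.1 j))

namespace Stmt10Aux


section Cast
variable (A : Type) [Semiring A] (P : ℤ → Type) [∀ j, AddCommGroup (P j)] [∀ j, Module A (P j)]
def lc {j j' : ℤ} (h : j = j') : P j →ₗ[A] P j' := h ▸ LinearMap.id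
@[simp] lemma lc_self {j : ℤ} (h : j = j) (x : P j) : lc A P h x = x := rfl
lemma lc_lc {j j' j'' : ℤ} (h : j = j') (h' : j' = j'') (x : P j) :
    lc A P h' (lc A P h x) = lc A P (h.trans h') x := by subst h'; subst h; rfl
lemma lc_cancel {j j' : ℤ} (h : j = j') (h' : j' = j) (x : P j) :
    lc A P h' (lc A P h x) = x := by rw [lc_lc]; exact rfl
end Cast

section Core

variable (A : Type) [Ring A]
variable (M N : ℤ → Type) [∀ i, AddCommGroup (M i)] [∀ i, Module A (M i)]
  [∀ j, AddCommGroup (N j)] [∀ j, Module A (N j)]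
variable (dM : ∀ i : ℤ, M (i + 1) →ₗ[A] M i) (dN : ∀ j : ℤ, N (j + 1) →ₗ[A] N j) (d : ℤ)

/-- The inductive invariant: the relation `g = dN ∘ h - ε • h ∘ dM` at level `m`,
where `a` plays the role of `h_m` and `b` of `h_{m+1}`. -/
def InvP (g : ∀ m t : ℤ, t = m + d → (M m →ₗ[A] N t)) (m : ℤ)
    (a : M m →ₗ[A] N (m + d + 1)) (b : M (m + 1) →ₗ[A] N (m + 1 + d + 1)) : Prop :=
  ∀ x : M (m + 1), g (m + 1) (m + 1 + d) rfl x
    = dN (m + 1 + d) (b x)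
      - ((d + 1).negOnePow : ℤ) • lc A N (show m + d + 1 = m + 1 + d by omega) (a (dM m x))

theorem core (κ : ℤ)
    (hdM : ∀ i x, dM i (dM (i + 1) x) = 0)
    (hdN : ∀ j x, dN j (dN (j + 1) x) = 0)
    (hproj : ∀ i, Module.Projective A (M i))
    (m₀ : ℤ) (hbelow : ∀ i, i < m₀ → Subsingleton (M i))
    (hexact : ∀ i, i + 1 ≤ κ → ∀ x : M (i + 1), dM i x = 0 → ∃ y, dM (i + 1) y = x)
    (htriv : ∀ j : ℤ, 0 < j → Subsingleton (N j))
    (hd : -κ ≤ d)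
    (g : ∀ m t : ℤ, t = m + d → (M m →ₗ[A] N t))
    (hcycle : ∀ (m : ℤ) (x : M (m + 1)),
      dN (m + d) (g (m + 1) (m + d + 1) (by omega) x)
        = (d.negOnePow : ℤ) • g m (m + d) rfl (dM m x)) :
    ∃ h : ∀ m t : ℤ, t = m + (d + 1) → (M m →ₗ[A] N t),
      ∀ (m : ℤ) (x : M (m + 1)),
        g (m + 1) (m + 1 + d) (by omega) x =
          dN (m + 1 + d) (h (m + 1) (m + 1 + d + 1) (by omega) x) -
            ((d + 1).negOnePow : ℤ) • h m (m + 1 + d) (by omega) (dM m x) := by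
  -- sign facts
  have hεε : ∀ (j : ℤ) (x : N j),
      ((d + 1).negOnePow : ℤ) • ((d + 1).negOnePow : ℤ) • x = x := by
    intro j x
    rw [smul_smul, ← Units.val_mul, Int.units_mul_self, Units.val_one, one_smul]
  have hεδ : ((d + 1).negOnePow : ℤ) * (d.negOnePow : ℤ) = -1 := by
    rw [Int.negOnePow_succ, Units.val_neg, neg_mul, ← Units.val_mul, Int.units_mul_self,
      Units.val_one]
  -- cast lemmas
  have gcast : ∀ (m t t' : ℤ) (ht : t = m + d) (ht' : t' = m + d) (h : t = t') (x : M m),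
      lc A N h (g m t ht x) = g m t' ht' x := by
    intro m t t' ht ht' h x
    subst h; subst ht; rw [lc_self]
  have dNdN : ∀ (a b : ℤ) (h : a = b + 1) (z : N (a + 1)),
      dN b (lc A N h (dN a z)) = 0 := by
    intro a b h z; subst h; rw [lc_self]; exact hdN b z
  have dMc : ∀ (a b : ℤ) (h : a = b) (hh : a + 1 = b + 1) (x : M (a + 1)),
      dM b (lc A M hh x) = lc A M h (dM a x) := by
    intro a b h hh x; subst h; rw [lc_self, lc_self]
  -- projectivity of the boundary submodules
  have projStep : ∀ i : ℤ, i + 1 ≤ κ →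
      Module.Projective A ↥(LinearMap.range (dM i)) →
      Module.Projective A ↥(LinearMap.range (dM (i + 1))) := by
    intro i hi hPi
    obtain ⟨s, hs⟩ := Module.projective_lifting_property ((dM i).rangeRestrict)
      LinearMap.id (LinearMap.surjective_rangeRestrict _)
    have hps : ∀ z, (dM i).rangeRestrict (s z) = z := by
      intro z; rw [← LinearMap.comp_apply, hs, LinearMap.id_apply]
    have hdMs : ∀ z, dM i (s z) = z.1 := by
      intro z
      have : ((dM i).rangeRestrict (s z)).1 = (z : M i) := by rw [hps]
      simpa using this
    set r : M (i + 1) →ₗ[A] M (i + 1) := LinearMap.id - s ∘ₗ (dM i).rangeRestrict with hr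
    have hr0 : ∀ x, dM i (r x) = 0 := by
      intro x
      simp only [hr, LinearMap.sub_apply, LinearMap.id_apply, LinearMap.comp_apply, map_sub,
        hdMs]
      simp
    have hrk : ∀ x, dM i x = 0 → r x = x := by
      intro x hx
      have hz : (dM i).rangeRestrict x = 0 := by
        apply Subtype.ext; simpa using hx
      simp only [hr, LinearMap.sub_apply, LinearMap.id_apply, LinearMap.comp_apply, hz, map_zero,
        sub_zero]
    have := hproj (i + 1)
    have hker : Module.Projective A ↥(LinearMap.ker (dM i)) := by
      refine Module.Projective.of_split (LinearMap.ker (dM i)).subtype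
        (r.codRestrict (LinearMap.ker (dM i)) (fun x => hr0 x)) ?_
      ext x
      exact congrArg Subtype.val (Subtype.ext (hrk x.1 x.2) :
        (r.codRestrict (LinearMap.ker (dM i)) (fun x => hr0 x)) x.1 = x)
    have hEq : LinearMap.ker (dM i) = LinearMap.range (dM (i + 1)) := by
      apply le_antisymm
      · intro x hx
        obtain ⟨y, hy⟩ := hexact i hi x hx
        exact ⟨y, hy⟩
      · rintro x ⟨y, rfl⟩
        exact hdM i y
    exact Module.Projective.of_equiv (LinearEquiv.ofEq _ _ hEq)
  have projB : ∀ i : ℤ, i ≤ κ → Module.Projective A ↥(LinearMap.range (dM i)) := by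
    have aux : ∀ k : ℕ, (m₀ - 1 + (k : ℤ) ≤ κ) →
        Module.Projective A ↥(LinearMap.range (dM (m₀ - 1 + (k : ℤ)))) := by
      intro k
      induction k with
      | zero =>
        intro _
        have : Subsingleton (M (m₀ - 1 + ((0 : ℕ) : ℤ))) := hbelow _ (by push_cast; omega)
        infer_instance
      | succ k ih =>
        intro hk
        have e : m₀ - 1 + ((k + 1 : ℕ) : ℤ) = (m₀ - 1 + (k : ℤ)) + 1 := by push_cast; ring
        rw [e]
        exact projStep _ (by push_cast at hk ⊢; omega) (ih (by push_cast at hk ⊢; omega))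
    intro i hi
    rcases lt_or_ge i m₀ with h | h
    · have : Subsingleton (M i) := hbelow i h
      infer_instance
    · obtain ⟨k, rfl⟩ : ∃ k : ℕ, i = m₀ - 1 + (k : ℤ) := ⟨(i - (m₀ - 1)).toNat, by omega⟩
      exact aux k hi
  -- extension lemma
  have extend : ∀ i : ℤ, i + 1 ≤ κ → ∀ (t : ℤ) (f : M (i + 1 + 1) →ₗ[A] N t),
      (∀ z, dM (i + 1) z = 0 → f z = 0) →
      ∃ Ψ : M (i + 1) →ₗ[A] N t, ∀ z, Ψ (dM (i + 1) z) = f z := by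
    intro i hi t f hf
    have hkf : LinearMap.ker (dM (i + 1)) ≤ LinearMap.ker f := fun z hz => hf z hz
    set ψ : ↥(LinearMap.range (dM (i + 1))) →ₗ[A] N t :=
      ((LinearMap.ker (dM (i + 1))).liftQ f hkf).comp
        ((dM (i + 1)).quotKerEquivRange.symm.toLinearMap) with hψdef
    have hψ : ∀ z : M (i + 1 + 1), ψ ⟨dM (i + 1) z, ⟨z, rfl⟩⟩ = f z := by
      intro z
      have h1 : (dM (i + 1)).quotKerEquivRange.symm ⟨dM (i + 1) z, ⟨z, rfl⟩⟩
          = Submodule.Quotient.mk z := by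
        rw [LinearEquiv.symm_apply_eq]
        exact Subtype.ext ((dM (i + 1)).quotKerEquivRange_apply_mk z).symm
      simp only [hψdef, LinearMap.comp_apply, LinearEquiv.coe_coe, h1, Submodule.liftQ_apply]
    have hPB := projB i (by omega)
    obtain ⟨s, hs⟩ := Module.projective_lifting_property ((dM i).rangeRestrict)
      LinearMap.id (LinearMap.surjective_rangeRestrict _)
    have hps : ∀ z, (dM i).rangeRestrict (s z) = z := by
      intro z; rw [← LinearMap.comp_apply, hs, LinearMap.id_apply]
    have hdMs : ∀ z, dM i (s z) = z.1 := by
      intro z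
      have : ((dM i).rangeRestrict (s z)).1 = (z : M i) := by rw [hps]
      simpa using this
    set r : M (i + 1) →ₗ[A] M (i + 1) := LinearMap.id - s ∘ₗ (dM i).rangeRestrict with hr
    have hr0 : ∀ x, dM i (r x) = 0 := by
      intro x
      simp only [hr, LinearMap.sub_apply, LinearMap.id_apply, LinearMap.comp_apply, map_sub,
        hdMs]
      simp
    have hrk : ∀ x, dM i x = 0 → r x = x := by
      intro x hx
      have hz : (dM i).rangeRestrict x = 0 := by
        apply Subtype.ext; simpa using hx
      simp only [hr, LinearMap.sub_apply, LinearMap.id_apply, LinearMap.comp_apply, hz, map_zero,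
        sub_zero]
    have hmem : ∀ x, r x ∈ LinearMap.range (dM (i + 1)) := by
      intro x
      obtain ⟨y, hy⟩ := hexact i hi (r x) (hr0 x)
      exact ⟨y, hy⟩
    refine ⟨ψ.comp (r.codRestrict (LinearMap.range (dM (i + 1))) hmem), ?_⟩
    intro z
    have h2 : (r.codRestrict (LinearMap.range (dM (i + 1))) hmem) (dM (i + 1) z)
        = ⟨dM (i + 1) z, ⟨z, rfl⟩⟩ :=
      Subtype.ext (hrk _ (hdM i z))
    rw [LinearMap.comp_apply, h2, hψ]
  -- the one-step construction
  have construct : ∀ m : ℤ, m ≤ -d - 1 →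
      ∀ (h1 : M (m + 1) →ₗ[A] N (m + 1 + d + 1)) (h2 : M (m + 1 + 1) →ₗ[A] N (m + 1 + 1 + d + 1)),
      InvP A M N dM dN d g (m + 1) h1 h2 →
      ∃ v : M m →ₗ[A] N (m + d + 1), InvP A M N dM dN d g m v h1 := by
    intro m hm h1 h2 inv1
    set f : M (m + 1) →ₗ[A] N (m + d + 1) :=
      ((d + 1).negOnePow : ℤ) • ((lc A N (show m + 1 + d = m + d + 1 by omega)).comp
        ((dN (m + 1 + d)).comp h1 - g (m + 1) (m + 1 + d) rfl)) with hfdef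
    have hf : ∀ x, f x = ((d + 1).negOnePow : ℤ) • lc A N (show m + 1 + d = m + d + 1 by omega)
        (dN (m + 1 + d) (h1 x) - g (m + 1) (m + 1 + d) rfl x) := by
      intro x
      simp only [hfdef, LinearMap.smul_apply, LinearMap.comp_apply, LinearMap.sub_apply]
    have fker : ∀ x : M (m + 1), dM m x = 0 → f x = 0 := by
      intro x hx
      obtain ⟨y, hy⟩ := hexact m (by omega) x hx
      subst hy
      have key : dN (m + 1 + d) (h1 (dM (m + 1) y))
          = g (m + 1) (m + 1 + d) rfl (dM (m + 1) y) := by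
        have e1 := inv1 y
        have e1' : ((d + 1).negOnePow : ℤ) • lc A N (show m + 1 + d + 1 = m + 1 + 1 + d by omega)
            (h1 (dM (m + 1) y))
            = dN (m + 1 + 1 + d) (h2 y) - g (m + 1 + 1) (m + 1 + 1 + d) rfl y := by
          rw [e1]; abel
        have e2 : lc A N (show m + 1 + d + 1 = m + 1 + 1 + d by omega) (h1 (dM (m + 1) y))
            = ((d + 1).negOnePow : ℤ) •
                (dN (m + 1 + 1 + d) (h2 y) - g (m + 1 + 1) (m + 1 + 1 + d) rfl y) := by
          rw [← e1', hεε]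
        have e3 : h1 (dM (m + 1) y)
            = lc A N (show m + 1 + 1 + d = m + 1 + d + 1 by omega)
                (((d + 1).negOnePow : ℤ) •
                  (dN (m + 1 + 1 + d) (h2 y) - g (m + 1 + 1) (m + 1 + 1 + d) rfl y)) := by
          rw [← e2, lc_cancel]
        rw [e3, map_zsmul, map_sub, map_zsmul, map_sub]
        rw [dNdN (m + 1 + 1 + d) (m + 1 + d) (by omega) (h2 y)]
        rw [gcast (m + 1 + 1) (m + 1 + 1 + d) (m + 1 + d + 1) rfl (by omega) (by omega) y]
        have hc := hcycle (m + 1) y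
        rw [hc]
        rw [zero_sub, smul_neg, smul_smul, hεδ, neg_smul, one_smul, neg_neg]
      rw [hf, key, sub_self, map_zero, smul_zero]
    obtain ⟨Ψ, hΨ⟩ := extend (m - 1) (by omega) (m + d + 1)
      (f.comp (lc A M (show m - 1 + 1 + 1 = m + 1 by omega)))
      (by
        intro z hz
        rw [LinearMap.comp_apply]
        apply fker
        rw [dMc (m - 1 + 1) m (by omega) (by omega) z, hz, map_zero])
    set v : M m →ₗ[A] N (m + d + 1) := Ψ.comp (lc A M (show m = m - 1 + 1 by omega)) with hvdef
    have hvx : ∀ x : M (m + 1), v (dM m x) = f x := by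
      intro x
      have step := dMc (m - 1 + 1) m (by omega) (by omega)
        (lc A M (show m + 1 = m - 1 + 1 + 1 by omega) x)
      rw [lc_cancel] at step
      have e4 : lc A M (show m = m - 1 + 1 by omega) (dM m x)
          = dM (m - 1 + 1) (lc A M (show m + 1 = m - 1 + 1 + 1 by omega) x) := by
        rw [step, lc_cancel]
      rw [hvdef, LinearMap.comp_apply, e4, hΨ, LinearMap.comp_apply, lc_cancel]
    refine ⟨v, ?_⟩
    intro x
    rw [hvx x, hf x, map_zsmul, hεε, lc_cancel]
    abel
  -- downward recursion building the nullhomotopy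
  have stmt : ∀ K : ℕ, ∃ hs : ∀ m : ℤ, M m →ₗ[A] N (m + d + 1),
      ∀ m : ℤ, -d - (K : ℤ) ≤ m → InvP A M N dM dN d g m (hs m) (hs (m + 1)) := by
    intro K
    induction K with
    | zero =>
      refine ⟨fun m => 0, ?_⟩
      intro m hm x
      have : Subsingleton (N (m + 1 + d)) := htriv _ (by omega)
      exact Subsingleton.elim _ _
    | succ K ih =>
      obtain ⟨hs, hInv⟩ := ih
      obtain ⟨v, hv⟩ := construct (-d - (K : ℤ) - 1) (by omega) (hs (-d - (K : ℤ) - 1 + 1))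
        (hs (-d - (K : ℤ) - 1 + 1 + 1)) (hInv (-d - (K : ℤ) - 1 + 1) (by omega))
      refine ⟨Function.update hs (-d - (K : ℤ) - 1) v, ?_⟩
      intro m hm
      rcases eq_or_ne m (-d - (K : ℤ) - 1) with he | he
      · subst he
        rw [Function.update_self, Function.update_of_ne (by omega)]
        exact hv
      · rw [Function.update_of_ne he, Function.update_of_ne (by omega)]
        exact hInv m (by omega)
  obtain ⟨hs, hInv⟩ := stmt (-d - m₀ + 1).toNat
  have invAll : ∀ m : ℤ, InvP A M N dM dN d g m (hs m) (hs (m + 1)) := by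
    intro m
    rcases le_or_gt (-d - ((-d - m₀ + 1).toNat : ℤ)) m with h | h
    · exact hInv m h
    · intro x
      have hmm : m + 1 < m₀ := by
        have := Int.self_le_toNat (-d - m₀ + 1)
        omega
      have : Subsingleton (M (m + 1)) := hbelow _ hmm
      have hx : x = 0 := Subsingleton.elim x 0
      subst hx
      simp only [map_zero, smul_zero, sub_zero]
  refine ⟨fun m t ht => (lc A N (show m + d + 1 = t by omega)).comp (hs m), ?_⟩
  intro m x
  rw [LinearMap.comp_apply, LinearMap.comp_apply, lc_self]
  exact invAll m x

end Core


section Conv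


variable {k G : Type} [CommRing k] [Group G]
variable {V W : Type} [AddCommGroup V] [Module k V] [AddCommGroup W] [Module k W]
variable (ρV : Representation k G V) (ρW : Representation k G W)

/-- Upgrade an equivariant `k`-linear map to a `MonoidAlgebra k G`-linear map. -/
noncomputable def toA (f : V →ₗ[k] W) (hf : ∀ g x, f (ρV g x) = ρW g (f x)) :
    ρV.asModule →ₗ[MonoidAlgebra k G] ρW.asModule where
  toFun x := f x
  map_add' := f.map_add
  map_smul' r x := by
    show f (ρV.asAlgebraHom r x) = ρW.asAlgebraHom r (f x)
    induction r using MonoidAlgebra.induction_on with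
    | of g => simpa [Representation.asAlgebraHom_of] using hf g x
    | add p q hp hq => rw [map_add ρV.asAlgebraHom, map_add ρW.asAlgebraHom]; show f (ρV.asAlgebraHom p x + ρV.asAlgebraHom q x) = _; rw [map_add f, hp, hq]; rfl
    | smul r p hp => rw [map_smul ρV.asAlgebraHom, map_smul ρW.asAlgebraHom]; show f (r • ρV.asAlgebraHom p x) = _; rw [map_smul f, hp]; rfl

@[simp] lemma toA_apply (f : V →ₗ[k] W) (hf) (x : V) : toA ρV ρW f hf x = f x := rfl

/-- Downgrade a `MonoidAlgebra k G`-linear map to a `k`-linear map. -/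
noncomputable def ofA (F : ρV.asModule →ₗ[MonoidAlgebra k G] ρW.asModule) : V →ₗ[k] W where
  toFun x := F x
  map_add' := F.map_add
  map_smul' r x := by
    have h1 : ρV.asModuleEquiv.symm (r • x)
        = algebraMap k (MonoidAlgebra k G) r • ρV.asModuleEquiv.symm x :=
      ρV.asModuleEquiv_symm_map_smul r x
    have h2 : ρW.asModuleEquiv.symm (r • F (ρV.asModuleEquiv.symm x))
        = algebraMap k (MonoidAlgebra k G) r • ρW.asModuleEquiv.symm
            (F (ρV.asModuleEquiv.symm x)) :=
      ρW.asModuleEquiv_symm_map_smul r _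
    show F (ρV.asModuleEquiv.symm (r • x)) = r • (F (ρV.asModuleEquiv.symm x))
    rw [h1, map_smul]
    exact h2.symm
  
@[simp] lemma ofA_apply (F : ρV.asModule →ₗ[MonoidAlgebra k G] ρW.asModule) (x : V) :
    ofA ρV ρW F x = F x := rfl

lemma ofA_equivariant (F : ρV.asModule →ₗ[MonoidAlgebra k G] ρW.asModule) (g : G) (x : V) :
    ofA ρV ρW F (ρV g x) = ρW g (ofA ρV ρW F x) := by
  have h1 : ρV.asModuleEquiv.symm (ρV g x)
      = MonoidAlgebra.of k G g • ρV.asModuleEquiv.symm x :=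
    ρV.asModuleEquiv_symm_map_rho g x
  have h2 : ρW.asModuleEquiv.symm (ρW g (F (ρV.asModuleEquiv.symm x)))
      = MonoidAlgebra.of k G g • ρW.asModuleEquiv.symm (F (ρV.asModuleEquiv.symm x)) :=
    ρW.asModuleEquiv_symm_map_rho g _
  show F (ρV.asModuleEquiv.symm (ρV g x)) = ρW g (F (ρV.asModuleEquiv.symm x))
  rw [h1, map_smul]
  exact h2.symm

end Conv


lemma gtp_subsingleton {𝕜 : Type} [Field 𝕜] {V : ℤ → Type} [∀ d, AddCommGroup (V d)]
    [∀ d, Module 𝕜 (V d)] {n : ℕ} (hn : 1 ≤ n)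
    (hconcV : ∀ j : ℤ, 0 < j → Subsingleton (V j)) (j : ℤ) (hj : 0 < j) :
    Subsingleton (gradedTensorPower 𝕜 V n j) := by
  haveI : ∀ gg : {g : Fin n → ℤ // (∑ i, g i) = j},
      Subsingleton (PiTensorProduct 𝕜 fun i => V (gg.1 i)) := by
    intro gg
    obtain ⟨i0, hi0⟩ : ∃ i0, 0 < gg.1 i0 := by
      by_contra hc
      push_neg at hc
      have hle : (∑ i, gg.1 i) ≤ 0 := Finset.sum_nonpos (fun i _ => hc i)
      have h2 := gg.2
      omega
    haveI hV : Subsingleton (V (gg.1 i0)) := hconcV _ hi0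
    have hzero : ∀ z : PiTensorProduct 𝕜 fun i => V (gg.1 i), z = 0 := by
      intro z
      induction z using PiTensorProduct.induction_on with
      | smul_tprod r f =>
        have hf : f i0 = 0 := Subsingleton.elim _ _
        rw [MultilinearMap.map_coord_zero (PiTensorProduct.tprod 𝕜) i0 hf, smul_zero]
      | add x y hx hy => rw [hx, hy, add_zero]
    exact ⟨fun a b => by rw [hzero a, hzero b]⟩
  infer_instance


end Stmt10Aux

/-- Let `C` be a finite dimensional chain complex with an action of the
symmetric group `Σₙ` such that each component is projective over `𝕜[Σₙ]` and
`H_k(C) = 0` for `k ≤ κ`, and let `V` be a finite dimensional complex concentrated in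
degrees `≤ 0`.  Then `H_k(Hom(C, V^{⊗n})^{Σₙ}) = 0` for all `k ≥ -κ`.  Here `T` is (a
graded vector space identified degree-wise with) `V^{⊗n}`, carrying a differential
`dT` and a `Σₙ`-action `ρT` commuting with it (covering in particular the canonical
ones); the invariant subcomplex `Hom(C,T)^{Σₙ}` consists in degree `d` of the
`Σₙ`-equivariant families `g m t : C_m →ₗ T_t` (`t = m + d`), with the usual
differential; and the vanishing of its homology in degree `d` says that every
equivariant cycle is the boundary of an equivariant family. -/
theorem stmt_10 (𝕜 : Type) [Field 𝕜] (n : ℕ) (hn : 1 ≤ n) (κ : ℤ)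
    (C : ℤ → Type) [∀ i, AddCommGroup (C i)] [∀ i, Module 𝕜 (C i)]
    (dC : ∀ i : ℤ, C (i + 1) →ₗ[𝕜] C i)
    (hdC : ∀ (i : ℤ) (x : C (i + 1 + 1)), dC i (dC (i + 1) x) = 0)
    (hfdC : ∀ i, FiniteDimensional 𝕜 (C i))
    (hsuppC : {i : ℤ | ∃ x : C i, x ≠ 0}.Finite)
    (ρC : ∀ i, Representation 𝕜 (Equiv.Perm (Fin n)) (C i))
    (hdCequiv : ∀ (i : ℤ) (σ : Equiv.Perm (Fin n)) (x : C (i + 1)),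
      dC i (ρC (i + 1) σ x) = ρC i σ (dC i x))
    (hproj : ∀ i, Module.Projective (MonoidAlgebra 𝕜 (Equiv.Perm (Fin n))) (ρC i).asModule)
    (hH : ∀ i : ℤ, i + 1 ≤ κ → ∀ x : C (i + 1), dC i x = 0 →
      ∃ y : C (i + 1 + 1), dC (i + 1) y = x)
    (V : ℤ → Type) [∀ j, AddCommGroup (V j)] [∀ j, Module 𝕜 (V j)]
    (dV : ∀ j : ℤ, V (j + 1) →ₗ[𝕜] V j)
    (hdV : ∀ (j : ℤ) (x : V (j + 1 + 1)), dV j (dV (j + 1) x) = 0)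
    (hfdV : ∀ j, FiniteDimensional 𝕜 (V j))
    (hsuppV : {j : ℤ | ∃ v : V j, v ≠ 0}.Finite)
    (hconcV : ∀ j : ℤ, 0 < j → Subsingleton (V j))
    (T : ℤ → Type) [∀ j, AddCommGroup (T j)] [∀ j, Module 𝕜 (T j)]
    (eT : ∀ j, T j ≃ₗ[𝕜] gradedTensorPower 𝕜 V n j)
    (dT : ∀ j : ℤ, T (j + 1) →ₗ[𝕜] T j)
    (hdT : ∀ (j : ℤ) (x : T (j + 1 + 1)), dT j (dT (j + 1) x) = 0)
    (ρT : ∀ j, Representation 𝕜 (Equiv.Perm (Fin n)) (T j))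
    (hdTequiv : ∀ (j : ℤ) (σ : Equiv.Perm (Fin n)) (x : T (j + 1)),
      dT j (ρT (j + 1) σ x) = ρT j σ (dT j x)) :
    ∀ d : ℤ, -κ ≤ d →
      ∀ g : ∀ (m t : ℤ), t = m + d → (C m →ₗ[𝕜] T t),
        -- `g` is `Σₙ`-equivariant:
        (∀ (m t : ℤ) (ht : t = m + d) (σ : Equiv.Perm (Fin n)) (x : C m),
          g m t ht (ρC m σ x) = ρT t σ (g m t ht x)) →
        -- `g` is a cycle:
        (∀ (m : ℤ) (x : C (m + 1)),
          dT (m + d) (g (m + 1) (m + d + 1) (by omega) x) =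
            (d.negOnePow : ℤ) • g m (m + d) rfl (dC m x)) →
        -- `g` is the boundary of a `Σₙ`-equivariant family `h`:
        ∃ h : ∀ (m t : ℤ), t = m + (d + 1) → (C m →ₗ[𝕜] T t),
          (∀ (m t : ℤ) (ht : t = m + (d + 1)) (σ : Equiv.Perm (Fin n)) (x : C m),
            h m t ht (ρC m σ x) = ρT t σ (h m t ht x)) ∧
          ∀ (m : ℤ) (x : C (m + 1)),
            g (m + 1) (m + 1 + d) (by omega) x =
              dT (m + 1 + d) (h (m + 1) (m + 1 + d + 1) (by omega) x) -
                ((d + 1).negOnePow : ℤ) • h m (m + 1 + d) (by omega) (dC m x) := by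
  intro d hd g hequiv hcycle
  -- `C` is bounded below
  obtain ⟨m₀, hm₀⟩ : ∃ m₀ : ℤ, ∀ i, i < m₀ → Subsingleton (C i) := by
    obtain ⟨b, hb⟩ := hsuppC.bddBelow
    refine ⟨b, fun i hi => ⟨fun x y => ?_⟩⟩
    have hx : x = 0 := by
      by_contra h
      exact absurd (hb (show i ∈ {i : ℤ | ∃ x : C i, x ≠ 0} from ⟨x, h⟩)) (by omega)
    have hy : y = 0 := by
      by_contra h
      exact absurd (hb (show i ∈ {i : ℤ | ∃ x : C i, x ≠ 0} from ⟨y, h⟩)) (by omega)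
    rw [hx, hy]
  -- `T` is concentrated in degrees `≤ 0`
  have hTsub : ∀ j : ℤ, 0 < j → Subsingleton (T j) := by
    intro j hj
    haveI := Stmt10Aux.gtp_subsingleton (𝕜 := 𝕜) hn hconcV j hj
    exact (eT j).toEquiv.subsingleton
  -- transfer everything to modules over the group algebra
  obtain ⟨hA, hAeq⟩ := Stmt10Aux.core (MonoidAlgebra 𝕜 (Equiv.Perm (Fin n)))
    (fun i => (ρC i).asModule) (fun j => (ρT j).asModule)
    (fun i => Stmt10Aux.toA (ρC (i + 1)) (ρC i) (dC i) (hdCequiv i))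
    (fun j => Stmt10Aux.toA (ρT (j + 1)) (ρT j) (dT j) (hdTequiv j))
    d κ
    (fun i x => hdC i x)
    (fun j x => hdT j x)
    hproj
    m₀ (fun i hi => hm₀ i hi)
    (fun i hi x hx => hH i hi x hx)
    (fun j hj => hTsub j hj)
    hd
    (fun m t ht => Stmt10Aux.toA (ρC m) (ρT t) (g m t ht) (hequiv m t ht))
    (fun m x => hcycle m x)
  refine ⟨fun m t ht => Stmt10Aux.ofA (ρC m) (ρT t) (hA m t ht), ?_, ?_⟩
  · intro m t ht σ x
    exact Stmt10Aux.ofA_equivariant (ρC m) (ρT t) (hA m t ht) σ x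
  · intro m x
    exact hAeq m x
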